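/- A group Γ acting by isometries on a complete CAT(1) space X has a fixed point if and only if it has an orbit of diameter < π/2... in particular: if Γ has an orbit of diameter < π/2, then Γ has a fixed point in X. -/

import Mathlib

open scoped ENNReal RealInnerProductSpace
open Set Filter

noncomputable section

/-- A complete metric space is *CAT(1)* if any two points at distance `< π` have a
midpoint, and the spherical (curvature 1) midpoint comparison inequality holds for
triangles of perimeter `< 2π`. -/
def IsCAT1 (X : Type*) [MetricSpace X] : Prop :=
  CompleteSpace X ∧
  (∀ x y : X, dist x y < Real.pi →
      ∃ m : X, dist x m = dist x y / 2 ∧ dist y m = dist x y / 2) ∧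
  (∀ x y z m : X, dist x y < Real.pi →
      dist x m = dist x y / 2 → dist y m = dist x y / 2 →
      dist x z + dist y z + dist x y < 2 * Real.pi →
      (Real.cos (dist x z) + Real.cos (dist y z)) / 2 ≤
        Real.cos (dist z m) * Real.cos (dist x y / 2))

/-- `γ` is a (unit–speed, minimizing) geodesic on the interval `[a,b]`. -/
def IsGeodesicOn {X : Type*} [MetricSpace X] (γ : ℝ → X) (a b : ℝ) : Prop :=
  ∀ s ∈ Set.Icc a b, ∀ t ∈ Set.Icc a b, dist (γ s) (γ t) = |s - t|

/-- A subset of a CAT(1) space is convex if any two of its points at distance `< π`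
are joined by a geodesic inside the subset. -/
def IsConvexSet {X : Type*} [MetricSpace X] (C : Set X) : Prop :=
  ∀ x ∈ C, ∀ y ∈ C, dist x y < Real.pi →
    ∃ γ : ℝ → X, γ 0 = x ∧ γ (dist x y) = y ∧ IsGeodesicOn γ 0 (dist x y) ∧
      ∀ t ∈ Set.Icc 0 (dist x y), γ t ∈ C

/-- The closed convex hull of a subset: the intersection of all closed convex sets
containing it. -/
def ClosedConvexHull {X : Type*} [MetricSpace X] (A : Set X) : Set X :=
  ⋂₀ {C : Set X | A ⊆ C ∧ IsClosed C ∧ IsConvexSet C}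

/-- The (circum)radius `rad X = inf_x sup_y d(x,y)` of a metric space, as an
extended nonnegative real. -/
def eRad (X : Type*) [MetricSpace X] : ℝ≥0∞ :=
  ⨅ x : X, ⨆ y : X, edist x y

private lemma arccos_antitone {x y : ℝ} (h : x ≤ y) : Real.arccos y ≤ Real.arccos x := by
  rw [Real.arccos_eq_pi_div_two_sub_arcsin, Real.arccos_eq_pi_div_two_sub_arcsin]
  have := Real.monotone_arcsin h
  linarith

/-- A group acting by isometries on a complete CAT(1) space has a
fixed point iff it has an orbit of diameter `< π/2`. -/
theorem statement5 (X : Type*) [MetricSpace X] (hX : IsCAT1 X)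
    (Γ : Type*) [Group Γ] [MulAction Γ X]
    (hiso : ∀ g : Γ, Isometry fun x : X => g • x) :
    (∃ x : X, ∀ g : Γ, g • x = x) ↔
      ∃ x : X, ∃ c : ℝ, c < Real.pi / 2 ∧ ∀ g h : Γ, dist (g • x) (h • x) ≤ c := by
  constructor
  · rintro ⟨x, hx⟩
    exact ⟨x, 0, by positivity, fun g h => by rw [hx g, hx h, dist_self]⟩
  rintro ⟨x, c, hc, hd⟩
  haveI : CompleteSpace X := hX.1
  haveI : Nonempty Γ := ⟨1⟩
  haveI : Nonempty X := ⟨x⟩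
  have hc0 : (0 : ℝ) ≤ c := by
    have := hd 1 1; simpa using this
  -- the threshold b
  set b : ℝ := (c + Real.pi / 2) / 2 with hbdef
  have hcb : c < b := by rw [hbdef]; linarith
  have hb2 : b < Real.pi / 2 := by rw [hbdef]; linarith
  have hb0 : (0 : ℝ) ≤ b := by linarith
  have hbpi : b < Real.pi := by linarith [Real.pi_pos]
  -- the orbit radius function
  set f : X → ℝ := fun z => ⨆ g : Γ, dist z (g • x) with hfdef
  have hbdd : ∀ z : X, BddAbove (Set.range fun g : Γ => dist z (g • x)) := by
    intro z
    refine ⟨dist z x + c, ?_⟩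
    rintro _ ⟨g, rfl⟩
    calc dist z (g • x) ≤ dist z ((1 : Γ) • x) + dist ((1 : Γ) • x) (g • x) := dist_triangle _ _ _
      _ ≤ dist z x + c := by
          rw [one_smul]
          exact add_le_add le_rfl (by simpa using hd 1 g)
  have f_le : ∀ (z : X) (g : Γ), dist z (g • x) ≤ f z := fun z g => le_ciSup (hbdd z) g
  have f_nonneg : ∀ z : X, 0 ≤ f z := fun z =>
    le_trans dist_nonneg (f_le z 1)
  have f_lip : ∀ z z' : X, f z ≤ f z' + dist z z' := by
    intro z z'
    refine ciSup_le fun g => ?_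
    calc dist z (g • x) ≤ dist z z' + dist z' (g • x) := dist_triangle _ _ _
      _ ≤ dist z z' + f z' := add_le_add le_rfl (f_le z' g)
      _ = f z' + dist z z' := add_comm _ _
  have hdzx : ∀ z : X, dist z x ≤ f z := by
    intro z
    have := f_le z 1; rwa [one_smul] at this
  have hfx : f x ≤ c := by
    refine ciSup_le fun g => ?_
    have := hd 1 g; rwa [one_smul] at this
  -- f is Γ-invariant
  have f_inv : ∀ (g : Γ) (z : X), f (g • z) = f z := by
    intro g z
    have key : ∀ (k : Γ) (w : X) (h : Γ), dist (k • w) (h • x) = dist w ((k⁻¹ * h) • x) := by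
      intro k w h
      have := (hiso k⁻¹).dist_eq (k • w) (h • x)
      rw [← this, inv_smul_smul, smul_smul]
    apply le_antisymm
    · refine ciSup_le fun h => ?_
      rw [key g z h]; exact f_le z _
    · refine ciSup_le fun h => ?_
      have : dist z (h • x) = dist (g • z) ((g * h) • x) := by
        rw [key g z (g * h)]; congr 1; group
      rw [this]; exact f_le (g • z) _
  -- the circumradius
  set R : ℝ := ⨅ z : X, f z with hRdef
  have hbddb : BddBelow (Set.range f) := ⟨0, by rintro _ ⟨z, rfl⟩; exact f_nonneg z⟩
  have hR_le : ∀ z : X, R ≤ f z := fun z => ciInf_le hbddb z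
  have hR0 : 0 ≤ R := le_ciInf f_nonneg
  have hRc : R ≤ c := (hR_le x).trans hfx
  have hcosR : 0 < Real.cos R :=
    Real.cos_pos_of_mem_Ioo ⟨by linarith [Real.pi_pos], by linarith⟩
  -- the key convexity estimate
  have key : ∀ z z' : X, f z ≤ b → f z' ≤ b →
      Real.cos (max (f z) (f z')) ≤ Real.cos R * Real.cos (dist z z' / 2) := by
    intro z z' hz hz'
    set δ := dist z z' with hδdef
    have hδ0 : 0 ≤ δ := dist_nonneg
    have hδ2b : δ ≤ 2 * b := by
      calc δ ≤ dist z x + dist x z' := dist_triangle _ _ _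
        _ ≤ f z + f z' := by
            have := hdzx z'; rw [dist_comm] at this
            exact add_le_add (hdzx z) this
        _ ≤ 2 * b := by linarith
    have hδπ : δ < Real.pi := by linarith
    obtain ⟨m, hm1, hm2⟩ := hX.2.1 z z' hδπ
    set Rm : ℝ := max (f z) (f z') with hRmdef
    have hRm0 : 0 ≤ Rm := le_trans (f_nonneg z) (le_max_left _ _)
    have hRmb : Rm ≤ b := max_le hz hz'
    have hcosδ2 : 0 < Real.cos (δ / 2) :=
      Real.cos_pos_of_mem_Ioo ⟨by linarith [Real.pi_pos], by linarith⟩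
    -- estimate for each orbit point
    have hest : ∀ g : Γ, Real.cos Rm / Real.cos (δ / 2) ≤ Real.cos (dist (g • x) m) := by
      intro g
      set y := g • x with hydef
      have hzy : dist z y ≤ f z := f_le z g
      have hz'y : dist z' y ≤ f z' := f_le z' g
      have hper : dist z y + dist z' y + δ < 2 * Real.pi := by
        have : dist z y + dist z' y + δ ≤ 4 * b := by linarith
        linarith [Real.pi_pos]
      have hcomp := hX.2.2 z z' y m hδπ hm1 hm2 hper
      have h1 : Real.cos Rm ≤ Real.cos (dist z y) :=
        Real.cos_le_cos_of_nonneg_of_le_pi dist_nonneg (by linarith)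
          (hzy.trans (le_max_left _ _))
      have h2 : Real.cos Rm ≤ Real.cos (dist z' y) :=
        Real.cos_le_cos_of_nonneg_of_le_pi dist_nonneg (by linarith)
          (hz'y.trans (le_max_right _ _))
      rw [div_le_iff₀ hcosδ2]
      calc Real.cos Rm ≤ (Real.cos (dist z y) + Real.cos (dist z' y)) / 2 := by linarith
        _ ≤ Real.cos (dist y m) * Real.cos (δ / 2) := hcomp
        _ = Real.cos (dist (g • x) m) * Real.cos (δ / 2) := rfl
    set A : ℝ := Real.cos Rm / Real.cos (δ / 2) with hAdef
    have hA1 : A ≤ 1 := le_trans (hest 1) (Real.cos_le_one _)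
    have hA0 : 0 ≤ A := by
      apply div_nonneg _ hcosδ2.le
      exact Real.cos_nonneg_of_mem_Icc ⟨by linarith [Real.pi_pos], by linarith⟩
    -- distance from orbit points to the midpoint
    have hdm : ∀ g : Γ, dist (g • x) m ≤ Real.arccos A := by
      intro g
      have hle : dist (g • x) m ≤ Real.pi := by
        calc dist (g • x) m ≤ dist (g • x) z + dist z m := dist_triangle _ _ _
          _ ≤ f z + δ / 2 := by
              rw [hm1]
              exact add_le_add_left (by rw [dist_comm]; exact f_le z g) _
          _ ≤ 2 * b := by linarith
          _ ≤ Real.pi := by linarith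
      calc dist (g • x) m = Real.arccos (Real.cos (dist (g • x) m)) :=
            (Real.arccos_cos dist_nonneg hle).symm
        _ ≤ Real.arccos A := arccos_antitone (hest g)
    have hfm : f m ≤ Real.arccos A :=
      ciSup_le fun g => by rw [dist_comm]; exact hdm g
    have hRA : R ≤ Real.arccos A := (hR_le m).trans hfm
    have : A ≤ Real.cos R := by
      calc A = Real.cos (Real.arccos A) := (Real.cos_arccos (by linarith) hA1).symm
        _ ≤ Real.cos R :=
            Real.cos_le_cos_of_nonneg_of_le_pi hR0 (Real.arccos_le_pi A) hRA
    rw [hAdef, div_le_iff₀ hcosδ2] at this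
    linarith
  -- a minimizing sequence
  have hsel : ∀ n : ℕ, ∃ z : X, f z < min b (R + 1 / (n + 1)) := by
    intro n
    apply exists_lt_of_ciInf_lt
    rw [← hRdef, lt_min_iff]
    constructor
    · linarith
    · have : (0 : ℝ) < 1 / (n + 1) := by positivity
      linarith
  choose u hu using hsel
  have hub : ∀ n, f (u n) ≤ b := fun n => ((hu n).trans_le (min_le_left _ _)).le
  have huR : ∀ n, f (u n) ≤ R + 1 / (n + 1) :=
    fun n => ((hu n).trans_le (min_le_right _ _)).le
  -- the Cauchy bound
  set s : ℕ → ℝ := fun N => min b (R + 1 / (N + 1)) with hsdef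
  have hsR : ∀ N, R ≤ s N := by
    intro N
    rw [le_min_iff]
    refine ⟨by linarith, ?_⟩
    have : (0 : ℝ) < 1 / (N + 1) := by positivity
    linarith
  have hsb : ∀ N, s N ≤ b := fun N => min_le_left _ _
  set bnd : ℕ → ℝ := fun N => 2 * Real.arccos (Real.cos (s N) / Real.cos R) with hbnddef
  have hbound : ∀ n m N : ℕ, N ≤ n → N ≤ m → dist (u n) (u m) ≤ bnd N := by
    intro n m N hn hm
    have hmono : ∀ k, N ≤ k → f (u k) ≤ s N := by
      intro k hk
      rw [le_min_iff]
      refine ⟨hub k, (huR k).trans ?_⟩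
      have : (1 : ℝ) / (k + 1) ≤ 1 / (N + 1) := by
        apply one_div_le_one_div_of_le (by positivity)
        exact_mod_cast add_le_add_left (Nat.cast_le.mpr hk) 1
      linarith
    have hkey := key (u n) (u m) (hub n) (hub m)
    set δ := dist (u n) (u m) with hδdef
    have hδ0 : 0 ≤ δ := dist_nonneg
    have hδ2b : δ ≤ 2 * b := by
      calc δ ≤ dist (u n) x + dist x (u m) := dist_triangle _ _ _
        _ ≤ f (u n) + f (u m) := by
            have h2 := hdzx (u m); rw [dist_comm] at h2
            exact add_le_add (hdzx (u n)) h2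
        _ ≤ 2 * b := by linarith [hub n, hub m]
    have hcosδ2 : 0 < Real.cos (δ / 2) :=
      Real.cos_pos_of_mem_Ioo ⟨by linarith [Real.pi_pos], by linarith⟩
    have hRm : max (f (u n)) (f (u m)) ≤ s N := max_le (hmono n hn) (hmono m hm)
    have hRm0 : 0 ≤ max (f (u n)) (f (u m)) :=
      le_trans (f_nonneg (u n)) (le_max_left _ _)
    have hcosS : Real.cos (s N) ≤ Real.cos (max (f (u n)) (f (u m))) :=
      Real.cos_le_cos_of_nonneg_of_le_pi hRm0 (by linarith [hsb N]) hRm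
    have hq : Real.cos (s N) / Real.cos R ≤ Real.cos (δ / 2) := by
      rw [div_le_iff₀ hcosR]
      calc Real.cos (s N) ≤ Real.cos (max (f (u n)) (f (u m))) := hcosS
        _ ≤ Real.cos R * Real.cos (δ / 2) := hkey
        _ = Real.cos (δ / 2) * Real.cos R := mul_comm _ _
    have hδ2 : δ / 2 ≤ Real.arccos (Real.cos (s N) / Real.cos R) := by
      calc δ / 2 = Real.arccos (Real.cos (δ / 2)) :=
            (Real.arccos_cos (by linarith) (by linarith)).symm
        _ ≤ _ := arccos_antitone hq
    rw [hbnddef]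
    dsimp only
    linarith
  -- the bound tends to zero
  have htend : Tendsto bnd atTop (nhds 0) := by
    have h1 : Tendsto (fun N : ℕ => (1 : ℝ) / (N + 1)) atTop (nhds 0) :=
      tendsto_one_div_add_atTop_nhds_zero_nat
    have hcont : Continuous fun t : ℝ =>
        2 * Real.arccos (Real.cos (min b (R + t)) / Real.cos R) :=
      continuous_const.mul (Real.continuous_arccos.comp
        ((Real.continuous_cos.comp
          (continuous_const.min (continuous_const.add continuous_id))).div_const _))
    have hval : 2 * Real.arccos (Real.cos (min b (R + 0)) / Real.cos R) = 0 := by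
      rw [add_zero, min_eq_right (by linarith : R ≤ b), div_self hcosR.ne',
        Real.arccos_one, mul_zero]
    have := (hcont.tendsto 0).comp h1
    rw [hval] at this
    exact this
  -- get the circumcenter
  have hcauchy : CauchySeq u := cauchySeq_of_le_tendsto_0 bnd (fun n m N hn hm => hbound n m N hn hm) htend
  obtain ⟨z, hz⟩ := cauchySeq_tendsto_of_complete hcauchy
  have hfz : f z = R := by
    apply le_antisymm _ (hR_le z)
    have hg : Tendsto (fun n : ℕ => R + 1 / (n + 1) + dist (u n) z) atTop (nhds R) := by
      have h1 : Tendsto (fun n : ℕ => R + 1 / (n + 1 : ℝ)) atTop (nhds (R + 0)) :=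
        tendsto_const_nhds.add tendsto_one_div_add_atTop_nhds_zero_nat
      have h2 : Tendsto (fun n => dist (u n) z) atTop (nhds 0) :=
        (tendsto_iff_dist_tendsto_zero.mp hz)
      have := h1.add h2
      simpa using this
    refine ge_of_tendsto hg (Eventually.of_forall fun n => ?_)
    calc f z ≤ f (u n) + dist z (u n) := f_lip z (u n)
      _ ≤ R + 1 / (n + 1) + dist (u n) z := by
          rw [dist_comm z (u n)]
          exact add_le_add_left (huR n) _
  have hfzb : f z ≤ b := by rw [hfz]; linarith
  -- z is the unique minimizer, hence fixed
  refine ⟨z, fun g => ?_⟩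
  have hfgz : f (g • z) = R := by rw [f_inv g z, hfz]
  have hkey := key z (g • z) hfzb (by rw [hfgz]; linarith)
  rw [hfz, hfgz, max_self] at hkey
  have hδ0 : 0 ≤ dist z (g • z) := dist_nonneg
  have hδ2b : dist z (g • z) ≤ 2 * b := by
    calc dist z (g • z) ≤ dist z x + dist x (g • z) := dist_triangle _ _ _
      _ ≤ f z + f (g • z) := by
          have h2 := hdzx (g • z); rw [dist_comm] at h2
          exact add_le_add (hdzx z) h2
      _ ≤ 2 * b := by rw [hfz, hfgz]; linarith
  have h1 : (1 : ℝ) ≤ Real.cos (dist z (g • z) / 2) := by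
    have := (le_mul_iff_one_le_right hcosR).mp hkey
    linarith
  have hcos1 : Real.cos (dist z (g • z) / 2) = 1 :=
    le_antisymm (Real.cos_le_one _) h1
  have := (Real.cos_eq_one_iff_of_lt_of_lt
    (by linarith [Real.pi_pos] : -(2 * Real.pi) < dist z (g • z) / 2)
    (by linarith [Real.pi_pos] : dist z (g • z) / 2 < 2 * Real.pi)).mp hcos1
  have hzz : dist z (g • z) = 0 := by linarith
  rw [dist_comm] at hzz
  exact dist_eq_zero.mp hzz
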